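/- arXiv:1404.7771 — 3 statements merged into one kernel-verified Lean document; each statement's English description precedes it below -/
import Mathlib

section
/- Let M be a vertically 3-connected matroid with no loops (no elements of rank 0) and at least 2 elements. Then every pair of elements of M lies in a common circuit. -/
/-- The rank of a set `X` in a (finite) matroid: the maximum size of an independent
subset of `X`. -/
noncomputable def mrk {α : Type*} (M : Matroid α) (X : Set α) : ℕ :=
  sSup {n | ∃ I, M.Indep I ∧ I ⊆ X ∧ I.ncard = n}

/-- A circuit of a matroid: a minimal dependent set. -/
def MIsCircuit {α : Type*} (M : Matroid α) (C : Set α) : Prop :=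
  M.Dep C ∧ ∀ D, D ⊂ C → ¬ M.Dep D

/-- `M` is vertically `t`-connected: for every partition `(A, M.E \ A)` of the ground set
with `r(A) + r(M.E \ A) < r(M) + t − 1`, one of the parts is spanning. -/
def MVertConn {α : Type*} (M : Matroid α) (t : ℤ) : Prop :=
  ∀ A ⊆ M.E, (mrk M A : ℤ) + mrk M (M.E \ A) < mrk M M.E + t - 1 →
    mrk M A = mrk M M.E ∨ mrk M (M.E \ A) = mrk M M.E

section Aux

open Set

variable {α : Type*} {M : Matroid α}

lemma mrk_bdd [M.Finite] (X : Set α) :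
    BddAbove {n | ∃ I, M.Indep I ∧ I ⊆ X ∧ I.ncard = n} := by
  refine ⟨M.E.ncard, fun n ⟨I, hI, _, hn⟩ => ?_⟩
  exact hn ▸ Set.ncard_le_ncard hI.subset_ground M.ground_finite

lemma mrk_mem (M : Matroid α) [M.Finite] (X : Set α) :
    ∃ I, M.Indep I ∧ I ⊆ X ∧ I.ncard = mrk M X := by
  have hne : (0:ℕ) ∈ {n | ∃ I, M.Indep I ∧ I ⊆ X ∧ I.ncard = n} :=
    ⟨∅, M.empty_indep, Set.empty_subset _, by simp⟩
  exact Nat.sSup_mem ⟨0, hne⟩ (mrk_bdd X)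

lemma le_mrk [M.Finite] {I X : Set α} (hI : M.Indep I) (hIX : I ⊆ X) :
    I.ncard ≤ mrk M X :=
  le_csSup (mrk_bdd X) ⟨I, hI, hIX, rfl⟩

lemma mrk_mono [M.Finite] {X Y : Set α} (h : X ⊆ Y) : mrk M X ≤ mrk M Y := by
  obtain ⟨I, hI, hIX, hcard⟩ := mrk_mem M X
  exact hcard ▸ le_mrk hI (hIX.trans h)

lemma exists_circuit_subset_aux [M.Finite] :
    ∀ n (D : Set α), D.ncard ≤ n → M.Dep D → ∃ C, C ⊆ D ∧ MIsCircuit M C := by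
  intro n
  induction n with
  | zero =>
    intro D hcard hD
    have hfin : D.Finite := M.ground_finite.subset hD.subset_ground
    rw [Nat.le_zero, Set.ncard_eq_zero hfin] at hcard
    exact absurd (hcard ▸ M.empty_indep) hD.not_indep
  | succ n ih =>
    intro D hcard hD
    by_cases h : ∀ D', D' ⊂ D → ¬ M.Dep D'
    · exact ⟨D, subset_rfl, hD, h⟩
    · push_neg at h
      obtain ⟨D', hss, hD'⟩ := h
      have hfin : D.Finite := M.ground_finite.subset hD.subset_ground
      have hlt : D'.ncard < D.ncard := Set.ncard_lt_ncard hss hfin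
      obtain ⟨C, hC1, hC2⟩ := ih D' (Nat.le_of_lt_succ (lt_of_lt_of_le hlt hcard)) hD'
      exact ⟨C, hC1.trans hss.subset, hC2⟩

lemma exists_circuit_subset [M.Finite] {D : Set α} (hD : M.Dep D) :
    ∃ C, C ⊆ D ∧ MIsCircuit M C :=
  exists_circuit_subset_aux D.ncard D le_rfl hD

lemma circuit_diff_indep {C : Set α} (hC : MIsCircuit M C) {x : α} (hx : x ∈ C) :
    M.Indep (C \ {x}) := by
  have hCE := hC.1.subset_ground
  rw [← Matroid.not_dep_iff (diff_subset.trans hCE)]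
  exact hC.2 _ (Set.sdiff_singleton_ssubset.mpr hx)

lemma circuit_mem_closure_diff {C : Set α} (hC : MIsCircuit M C) {x : α} (hx : x ∈ C) :
    x ∈ M.closure (C \ {x}) := by
  have hCE := hC.1.subset_ground
  have hdiff := circuit_diff_indep hC hx
  by_contra hxc
  have : M.Indep (insert x (C \ {x})) := by
    rw [Matroid.Indep.insert_indep_iff_of_notMem hdiff (by simp)]
    exact ⟨hCE hx, hxc⟩
  rw [Set.insert_diff_singleton, Set.insert_eq_of_mem hx] at this
  exact hC.1.not_indep this

lemma exists_circuit_of_mem_closure [M.Finite] {T : Set α} {e : α} (hT : T ⊆ M.E)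
    (he : e ∈ M.closure T) (heT : e ∉ T) :
    ∃ C, MIsCircuit M C ∧ e ∈ C ∧ C ⊆ insert e T := by
  obtain ⟨I, hI⟩ := M.exists_isBasis T hT
  have heI : e ∈ M.closure I := by rw [hI.closure_eq_closure]; exact he
  have heI' : e ∉ I := fun h => heT (hI.subset h)
  have hdep : M.Dep (insert e I) := hI.indep.insert_dep_iff.mpr ⟨heI, heI'⟩
  obtain ⟨C, hCsub, hC⟩ := exists_circuit_subset hdep
  refine ⟨C, hC, ?_, hCsub.trans (Set.insert_subset_insert hI.subset)⟩
  by_contra heC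
  have hCI : C ⊆ I := fun x hx =>
    ((hCsub hx).resolve_left (fun h => heC (h ▸ hx)))
  exact hC.1.not_indep (hI.indep.subset hCI)

/-- Strong circuit elimination (a general form). -/
lemma strong_elim [M.Finite] {C₁ C₂ : Set α} (h₁ : MIsCircuit M C₁) (h₂ : MIsCircuit M C₂)
    {e g : α} (he₁ : e ∈ C₁) (he₂ : e ∉ C₂) (hg : g ∈ C₂) (hge : g ≠ e) :
    ∃ C, MIsCircuit M C ∧ e ∈ C ∧ C ⊆ (C₁ ∪ C₂) \ {g} := by
  set T := (C₁ ∪ C₂) \ {g, e} with hTdef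
  have hTE : T ⊆ M.E :=
    diff_subset.trans (union_subset h₁.1.subset_ground h₂.1.subset_ground)
  have hgT : g ∈ M.closure T := by
    have h1 : C₂ \ {g} ⊆ T := by
      rintro x ⟨hx1, hx2⟩
      refine ⟨Or.inr hx1, ?_⟩
      rintro (rfl | rfl)
      · exact hx2 rfl
      · exact he₂ hx1
    exact M.closure_subset_closure h1 (circuit_mem_closure_diff h₂ hg)
  have hcl : M.closure (insert g T) ⊆ M.closure T := by
    rw [← M.closure_closure T]
    exact M.closure_subset_closure (Set.insert_subset hgT (M.subset_closure T hTE))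
  have heT : e ∈ M.closure T := by
    apply hcl
    have hsub : C₁ \ {e} ⊆ insert g T := by
      rintro x ⟨hx1, hx2⟩
      by_cases hxg : x = g
      · exact Or.inl hxg
      · refine Or.inr ⟨Or.inl hx1, ?_⟩
        rintro (rfl | rfl)
        · exact hxg rfl
        · exact hx2 rfl
    exact M.closure_subset_closure hsub (circuit_mem_closure_diff h₁ he₁)
  have heT' : e ∉ T := fun h => h.2 (Or.inr rfl)
  obtain ⟨C, hC, heC, hCsub⟩ := exists_circuit_of_mem_closure hTE heT heT'
  refine ⟨C, hC, heC, hCsub.trans ?_⟩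
  rintro x (rfl | hx)
  · exact ⟨Or.inl he₁, fun h => hge (by simpa using h.symm)⟩
  · exact ⟨hx.1, fun h => hx.2 (Or.inl (by simpa using h))⟩

lemma circuit_trans_aux [M.Finite] :
    ∀ n {C₁ C₂ : Set α} {e f : α}, (C₁ ∪ C₂).ncard ≤ n →
    MIsCircuit M C₁ → MIsCircuit M C₂ → e ∈ C₁ → f ∈ C₂ → (C₁ ∩ C₂).Nonempty →
    ∃ C, MIsCircuit M C ∧ e ∈ C ∧ f ∈ C := by
  intro n
  induction n with
  | zero =>
    intro C₁ C₂ e f hn h₁ h₂ he hf _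
    have hfin : (C₁ ∪ C₂).Finite :=
      M.ground_finite.subset (union_subset h₁.1.subset_ground h₂.1.subset_ground)
    rw [Nat.le_zero, Set.ncard_eq_zero hfin] at hn
    have hmem : e ∈ C₁ ∪ C₂ := Or.inl he
    rw [hn] at hmem
    exact absurd hmem (Set.notMem_empty e)
  | succ n ih =>
    intro C₁ C₂ e f hn h₁ h₂ he hf hne
    by_cases hfC₁ : f ∈ C₁
    · exact ⟨C₁, h₁, he, hfC₁⟩
    by_cases heC₂ : e ∈ C₂
    · exact ⟨C₂, h₂, heC₂, hf⟩
    obtain ⟨g, hg₁, hg₂⟩ := hne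
    have hge : g ≠ e := fun h => heC₂ (h ▸ hg₂)
    obtain ⟨C₃, hC₃, heC₃, hC₃sub⟩ := strong_elim h₁ h₂ he heC₂ hg₂ hge
    by_cases hfC₃ : f ∈ C₃
    · exact ⟨C₃, hC₃, heC₃, hfC₃⟩
    have hx : ∃ x, x ∈ C₃ ∧ x ∉ C₁ := by
      by_contra hcon
      push_neg at hcon
      have hss : C₃ ⊆ C₁ \ {g} := fun x hx => ⟨hcon x hx, (hC₃sub hx).2⟩
      exact h₁.2 C₃ (hss.trans_ssubset (Set.sdiff_singleton_ssubset.mpr hg₁)) hC₃.1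
    obtain ⟨x, hxC₃, hxC₁⟩ := hx
    have hxC₂ : x ∈ C₂ := ((hC₃sub hxC₃).1.resolve_left hxC₁)
    have hxf : x ≠ f := fun h => hfC₃ (h ▸ hxC₃)
    obtain ⟨C₄, hC₄, hfC₄, hC₄sub⟩ := strong_elim h₂ hC₃ hf hfC₃ hxC₃ hxf
    by_cases heC₄ : e ∈ C₄
    · exact ⟨C₄, hC₄, heC₄, hfC₄⟩
    have hy : ∃ y, y ∈ C₄ ∧ y ∉ C₂ := by
      by_contra hcon
      push_neg at hcon
      have hss : C₄ ⊆ C₂ \ {x} := fun z hz => ⟨hcon z hz, (hC₄sub hz).2⟩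
      exact h₂.2 C₄ (hss.trans_ssubset (Set.sdiff_singleton_ssubset.mpr hxC₂)) hC₄.1
    obtain ⟨y, hyC₄, hyC₂⟩ := hy
    have hyC₁ : y ∈ C₁ := by
      have h1 : y ∈ C₂ ∪ C₃ := (hC₄sub hyC₄).1
      have h2 : y ∈ C₃ := h1.resolve_left hyC₂
      exact ((hC₃sub h2).1.resolve_right hyC₂)
    have hC₄' : C₄ ⊆ (C₁ ∪ C₂) \ {x} := by
      intro z hz
      have h1 := hC₄sub hz
      refine ⟨?_, h1.2⟩
      rcases h1.1 with h | h
      · exact Or.inr h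
      · exact (hC₃sub h).1
    have hsubU : C₁ ∪ C₄ ⊆ (C₁ ∪ C₂) \ {x} := by
      rintro z (hz | hz)
      · exact ⟨Or.inl hz, fun h => hxC₁ (by simpa using h ▸ hz)⟩
      · exact hC₄' hz
    have hssU : C₁ ∪ C₄ ⊂ C₁ ∪ C₂ := by
      refine hsubU.trans_ssubset ?_
      exact Set.sdiff_singleton_ssubset.mpr (Or.inr hxC₂)
    have hfin : (C₁ ∪ C₂).Finite :=
      M.ground_finite.subset (union_subset h₁.1.subset_ground h₂.1.subset_ground)
    have hlt : (C₁ ∪ C₄).ncard < (C₁ ∪ C₂).ncard := Set.ncard_lt_ncard hssU hfin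
    exact ih (Nat.le_of_lt_succ (lt_of_lt_of_le hlt hn)) h₁ hC₄ he hfC₄ ⟨y, hyC₁, hyC₄⟩

lemma circuit_trans [M.Finite] {C₁ C₂ : Set α} {e f : α} (h₁ : MIsCircuit M C₁)
    (h₂ : MIsCircuit M C₂) (he : e ∈ C₁) (hf : f ∈ C₂) (hne : (C₁ ∩ C₂).Nonempty) :
    ∃ C, MIsCircuit M C ∧ e ∈ C ∧ f ∈ C :=
  circuit_trans_aux (C₁ ∪ C₂).ncard le_rfl h₁ h₂ he hf hne

lemma mrk_add [M.Finite] {A : Set α} (hA : A ⊆ M.E)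
    (hcirc : ∀ C, MIsCircuit M C → C ⊆ A ∨ C ⊆ M.E \ A) :
    mrk M A + mrk M (M.E \ A) = mrk M M.E := by
  set B := M.E \ A with hBdef
  have hdisj : Disjoint A B := disjoint_sdiff_right
  have hunion : A ∪ B = M.E := Set.union_diff_cancel' subset_rfl hA
  apply le_antisymm
  · obtain ⟨IA, hIA, hIAA, hcA⟩ := mrk_mem M A
    obtain ⟨IB, hIB, hIBB, hcB⟩ := mrk_mem M B
    have hIAB : Disjoint IA IB := hdisj.mono hIAA hIBB
    have hUE : IA ∪ IB ⊆ M.E := union_subset (hIAA.trans hA) (hIBB.trans diff_subset)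
    have hind : M.Indep (IA ∪ IB) := by
      by_contra hni
      obtain ⟨C, hCsub, hC⟩ := exists_circuit_subset ⟨hni, hUE⟩
      rcases hcirc C hC with h | h
      · refine hC.1.not_indep (hIA.subset (fun x hx => ?_))
        exact (hCsub hx).resolve_right
          (fun hxB => (Set.disjoint_left.mp hdisj (h hx) (hIBB hxB)))
      · refine hC.1.not_indep (hIB.subset (fun x hx => ?_))
        exact (hCsub hx).resolve_left
          (fun hxA => (Set.disjoint_left.mp hdisj (hIAA hxA) (h hx)))
    have hcardU : (IA ∪ IB).ncard = IA.ncard + IB.ncard :=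
      Set.ncard_union_eq hIAB (M.ground_finite.subset (hIAA.trans hA))
        (M.ground_finite.subset (hIBB.trans diff_subset))
    calc mrk M A + mrk M B = (IA ∪ IB).ncard := by rw [hcardU, hcA, hcB]
      _ ≤ mrk M M.E := le_mrk hind hUE
  · obtain ⟨J, hJ, hJE, hcJ⟩ := mrk_mem M M.E
    have hJsplit : J = (J ∩ A) ∪ (J ∩ B) := by
      rw [← Set.inter_union_distrib_left, hunion, Set.inter_eq_left.mpr hJE]
    have hfinJ : J.Finite := M.ground_finite.subset hJE
    have hcardJ : J.ncard = (J ∩ A).ncard + (J ∩ B).ncard := by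
      nth_rewrite 1 [hJsplit]
      exact Set.ncard_union_eq (hdisj.mono inter_subset_right inter_subset_right)
        (hfinJ.subset inter_subset_left) (hfinJ.subset inter_subset_left)
    calc mrk M M.E = (J ∩ A).ncard + (J ∩ B).ncard := by rw [← hcardJ, hcJ]
      _ ≤ mrk M A + mrk M B :=
        Nat.add_le_add (le_mrk (hJ.subset inter_subset_left) inter_subset_right)
          (le_mrk (hJ.subset inter_subset_left) inter_subset_right)

end Aux

/-- In a vertically 3-connected finite matroid with at least two elements and no loops,
every pair of distinct elements lies in a common circuit. -/
theorem pair_in_circuit {α : Type*} (M : Matroid α) [M.Finite]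
    (hconn : MVertConn M 3) (hloopless : ∀ e ∈ M.E, 0 < mrk M {e})
    (hcard : 2 ≤ M.E.ncard) :
    ∀ e ∈ M.E, ∀ f ∈ M.E, e ≠ f → ∃ C, MIsCircuit M C ∧ e ∈ C ∧ f ∈ C := by
  intro e he f hf hef
  by_contra hno
  push_neg at hno
  set A := {g | g ∈ M.E ∧ (g = e ∨ ∃ C, MIsCircuit M C ∧ e ∈ C ∧ g ∈ C)} with hAdef
  have hAE : A ⊆ M.E := fun x hx => hx.1
  have hcirc : ∀ C, MIsCircuit M C → C ⊆ A ∨ C ⊆ M.E \ A := by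
    intro C hC
    by_cases hCA : (C ∩ A).Nonempty
    · left
      obtain ⟨g, hgC, hgA⟩ := hCA
      intro h hhC
      refine ⟨hC.1.subset_ground hhC, Or.inr ?_⟩
      by_cases heC : e ∈ C
      · exact ⟨C, hC, heC, hhC⟩
      · rcases hgA.2 with rfl | ⟨C₁, hC₁, heC₁, hgC₁⟩
        · exact absurd hgC heC
        · exact circuit_trans hC₁ hC heC₁ hhC ⟨g, hgC₁, hgC⟩
    · right
      intro x hx
      exact ⟨hC.1.subset_ground hx, fun hxA => hCA ⟨x, hx, hxA⟩⟩
  have hsum := mrk_add hAE hcirc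
  have heA : e ∈ A := ⟨he, Or.inl rfl⟩
  have hfB : f ∈ M.E \ A := by
    refine ⟨hf, fun hfA => ?_⟩
    rcases hfA.2 with rfl | ⟨C, hC, heC, hfC⟩
    · exact hef rfl
    · exact hno C hC heC hfC
  have hlt : (mrk M A : ℤ) + mrk M (M.E \ A) < mrk M M.E + 3 - 1 := by
    have : (mrk M A : ℤ) + mrk M (M.E \ A) = mrk M M.E := by exact_mod_cast hsum
    omega
  rcases hconn A hAE hlt with h | h
  · have hB0 : mrk M (M.E \ A) = 0 := by omega
    have hfpos := hloopless f hf
    have : mrk M {f} ≤ mrk M (M.E \ A) :=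
      mrk_mono (Set.singleton_subset_iff.mpr hfB)
    omega
  · have hA0 : mrk M A = 0 := by omega
    have hepos := hloopless e he
    have : mrk M {e} ≤ mrk M A := mrk_mono (Set.singleton_subset_iff.mpr heA)
    omega
end

section
/- Let A be a matrix over a field F in which every column has at most two nonzero entries (a frame matrix), with a graph representation (G,Σ): each column e with two nonzero entries in rows x,y is an arc from x to y labelled −A[e,x]·A[e,y]^{−1}. If C is a balanced cycle of (G,Σ) (the product of labels, inverted for arcs traversed backwards, equals 1), then the set of columns of A indexed by the edges of C is linearly dependent. -/
open Fin.NatCast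

/-- Let `A` be a frame matrix over a field `F` (rows `V`, columns `E`, every column with at
most two nonzero entries), with graph representation `(G, Σ)`: a column `e` with two nonzero
entries in rows `x, y` is an arc from `x` to `y` labelled `−A[e,x]·A[e,y]⁻¹`. If `C` is a
balanced cycle of `(G, Σ)` — given by distinct vertices `v 0, …, v (k+1)` and distinct
arcs `e i` joining `v i` and `v (i+1)` (indices cyclic), whose sign
`∏ i, (−A[v i, e i]·A[v (i+1), e i]⁻¹)` equals `1` — then the columns of `A` indexed by
the edges of `C` are linearly dependent. -/
theorem balanced_cycle_dependent {F V E : Type*} [Field F] [Fintype V]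
    (A : V → E → F)
    (hframe : ∀ e : E, ∃ x y : V, ∀ w : V, A w e ≠ 0 → w = x ∨ w = y)
    (k : ℕ) (v : Fin (k + 2) → V) (e : Fin (k + 2) → E)
    (hv : Function.Injective v) (he : Function.Injective e)
    (hsupp : ∀ i w, A w (e i) ≠ 0 → w = v i ∨ w = v (i + 1))
    (hnz₁ : ∀ i, A (v i) (e i) ≠ 0) (hnz₂ : ∀ i, A (v (i + 1)) (e i) ≠ 0)
    (hbal : ∏ i : Fin (k + 2), (-(A (v i) (e i)) * (A (v (i + 1)) (e i))⁻¹) = 1) :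
    ¬ LinearIndependent F (fun i : Fin (k + 2) => fun w => A w (e i)) := by
  set σ : Fin (k + 2) → F := fun i => -(A (v i) (e i)) * (A (v (i + 1)) (e i))⁻¹ with hσ
  set c : Fin (k + 2) → F :=
    fun i => (∏ j ∈ Finset.range i.val, (σ (j : Fin (k + 2)))⁻¹) * (A (v i) (e i))⁻¹ with hc
  have hprod : ∏ j ∈ Finset.range (k + 2), (σ (j : Fin (k + 2)))⁻¹ = 1 := by
    rw [Finset.prod_inv_distrib]
    have h2 := Fin.prod_univ_eq_prod_range (fun n => σ (n : Fin (k + 2))) (k + 2)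
    simp only [Fin.cast_val_eq_self] at h2
    rw [← h2, hbal, inv_one]
  have hrec : ∀ i : Fin (k + 2),
      c i * A (v (i + 1)) (e i) = -(c (i + 1) * A (v (i + 1)) (e (i + 1))) := by
    intro i
    have h1 : c (i + 1) * A (v (i + 1)) (e (i + 1)) =
        ∏ j ∈ Finset.range (i + 1).val, (σ (j : Fin (k + 2)))⁻¹ := by
      rw [hc, mul_assoc, inv_mul_cancel₀ (hnz₁ (i + 1)), mul_one]
    have hσinv : (σ i)⁻¹ = -(A (v (i + 1)) (e i)) * (A (v i) (e i))⁻¹ := by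
      rw [hσ]
      simp only [mul_inv_rev, inv_inv, inv_neg, neg_mul, mul_neg, neg_neg, neg_inj]
    have h2 : c i * A (v (i + 1)) (e i) =
        -∏ j ∈ Finset.range (i.val + 1), (σ (j : Fin (k + 2)))⁻¹ := by
      rw [Finset.prod_range_succ, Fin.cast_val_eq_self, hσinv, hc]
      field_simp
    rcases Nat.lt_or_ge i.val (k + 1) with hi | hi
    · have hval : (i + 1).val = i.val + 1 := Fin.val_add_one_of_lt hi
      rw [h1, hval, h2]
    · have hival : i.val = k + 1 := by omega
      have hlast : i = Fin.last (k + 1) := by apply Fin.ext; simpa using hival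
      have hval0 : (i + 1).val = 0 := by rw [hlast]; simp
      rw [h1, hval0, h2, hival, hprod]
      simp
  have hsum : ∀ w : V, ∑ i : Fin (k + 2), c i * A w (e i) = 0 := by
    intro w
    by_cases hw : ∃ j, w = v j
    · obtain ⟨j, rfl⟩ := hw
      have hne : j - 1 ≠ j := by
        intro h
        have h1 : (1 : Fin (k + 2)) = 0 := sub_eq_self.mp h
        simpa using congrArg Fin.val h1
      have key : ∑ i : Fin (k + 2), c i * A (v j) (e i)
          = ∑ i ∈ ({j - 1, j} : Finset (Fin (k + 2))), c i * A (v j) (e i) := by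
        symm
        apply Finset.sum_subset (Finset.subset_univ _)
        intro i _ hi
        simp only [Finset.mem_insert, Finset.mem_singleton, not_or] at hi
        have hz : A (v j) (e i) = 0 := by
          by_contra hA
          rcases hsupp i (v j) hA with h' | h'
          · exact hi.2 (hv h').symm
          · refine hi.1 ?_
            rw [hv h', add_sub_cancel_right]
        simp [hz]
      rw [key, Finset.sum_pair hne]
      have hr := hrec (j - 1)
      rw [sub_add_cancel] at hr
      rw [hr]; ring
    · apply Finset.sum_eq_zero
      intro i _
      have hz : A w (e i) = 0 := by
        by_contra hA
        rcases hsupp i w hA with h' | h' <;> exact hw ⟨_, h'⟩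
      simp [hz]
  rw [Fintype.not_linearIndependent_iff]
  refine ⟨c, ?_, 0, ?_⟩
  · funext w
    simpa [Finset.sum_apply, smul_eq_mul] using hsum w
  · rw [hc]
    simp [hnz₁ 0]
end

section
/- Let A be a frame matrix over a field F (every column has at most two nonzero entries) with graph representation (G,Σ). If H is a connected subgraph of G of minimum degree at least 2 that is not a cycle, then the columns of A indexed by the edges of H are linearly dependent. -/
/-- A finite edge set `H` of a multigraph/digraph (with endpoint map `ends : E → V × V`)
is a cycle: a closed walk with distinct vertices `f i` and distinct edges `g i` whose edge
set is exactly `H`, each edge joining consecutive vertices (in either direction). -/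
def IsCycleEdgeSet {V E : Type*} [DecidableEq E] (ends : E → V × V) (H : Finset E) : Prop :=
  ∃ (k : ℕ) (f : Fin (k + 1) → V) (g : Fin (k + 1) → E),
    Function.Injective f ∧ Function.Injective g ∧
    H = Finset.image g Finset.univ ∧
    ∀ i : Fin (k + 1), ends (g i) = (f i, f (i + 1)) ∨ ends (g i) = (f (i + 1), f i)

open Finset in
theorem cycle_of_two_regular {V E : Type*} [DecidableEq V] [DecidableEq E]
    (ends : E → V × V) (H : Finset E) (hne : H.Nonempty)
    (hdeg2 : ∀ x : V, (∃ e ∈ H, (ends e).1 = x ∨ (ends e).2 = x) →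
      (∑ e ∈ H, ((if (ends e).1 = x then 1 else 0) + (if (ends e).2 = x then 1 else 0))) = 2)
    (hconn : ∀ x y : V, (∃ e ∈ H, (ends e).1 = x ∨ (ends e).2 = x) →
      (∃ e ∈ H, (ends e).1 = y ∨ (ends e).2 = y) →
      Relation.ReflTransGen (fun a b => ∃ e ∈ H, ends e = (a, b) ∨ ends e = (b, a)) x y) :
    IsCycleEdgeSet ends H := by
  classical
  -- incidences
  let P := (↥H × Bool)
  let vtx : P → V := fun p => if p.2 then (ends (p.1 : E)).1 else (ends (p.1 : E)).2
  have hvtx_incident : ∀ p : P, ∃ e ∈ H, (ends e).1 = vtx p ∨ (ends e).2 = vtx p := by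
    intro p
    refine ⟨(p.1 : E), p.1.2, ?_⟩
    by_cases hb : p.2 <;> simp [vtx, hb]
  -- each vertex of H has exactly two incidences
  have hcount : ∀ p : P, (univ.filter fun r : P => vtx r = vtx p).card = 2 := by
    intro p
    have h2 := hdeg2 (vtx p) (hvtx_incident p)
    rw [← h2]
    rw [Finset.card_filter]
    rw [Fintype.sum_prod_type]
    rw [← Finset.sum_attach H (fun e => ((if (ends e).1 = vtx p then 1 else 0) +
      (if (ends e).2 = vtx p then 1 else 0)))]
    refine Finset.sum_congr rfl fun e _ => ?_
    rw [Fintype.sum_bool]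
    congr 1 <;> simp [vtx, eq_comm]
  have pair : ∀ p : P, ∃! q : P, q ≠ p ∧ vtx q = vtx p := by
    intro p
    have hc := hcount p
    obtain ⟨a, b, hab, hs⟩ := Finset.card_eq_two.mp hc
    have hpmem : p ∈ univ.filter fun r : P => vtx r = vtx p := by simp only [Finset.mem_filter, Finset.mem_univ, true_and]
    rw [hs] at hpmem
    rcases Finset.mem_insert.mp hpmem with h | h
    · -- p = a, other is b
      refine ⟨b, ⟨by rw [← h] at hab; exact fun hh => hab hh.symm, ?_⟩, ?_⟩
      · have : b ∈ univ.filter fun r : P => vtx r = vtx p := by rw [hs]; simp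
        simpa using this
      · intro q ⟨hq1, hq2⟩
        have : q ∈ ({a, b} : Finset P) := by rw [← hs]; simp [hq2]
        rcases Finset.mem_insert.mp this with h' | h'
        · exact absurd (h'.trans h.symm) hq1  -- q = a = p
        · simpa using h'
    · -- p = b, other is a
      have h : p = b := by simpa using h
      refine ⟨a, ⟨by rw [← h] at hab; exact fun hh => hab hh, ?_⟩, ?_⟩
      · have : a ∈ univ.filter fun r : P => vtx r = vtx p := by rw [hs]; simp
        simpa using this
      · intro q ⟨hq1, hq2⟩
        have : q ∈ ({a, b} : Finset P) := by rw [← hs]; simp [hq2]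
        rcases Finset.mem_insert.mp this with h' | h'
        · simpa using h'
        · have h'' : q = b := by simpa using h'
          exact absurd (h''.trans h.symm) hq1
  choose other hother using pair
  have ho_ne : ∀ p : P, other p ≠ p := fun p => (hother p).1.1
  have ho_vtx : ∀ p : P, vtx (other p) = vtx p := fun p => (hother p).1.2
  have ho_uniq : ∀ p q : P, q ≠ p → vtx q = vtx p → q = other p :=
    fun p q h1 h2 => (hother p).2 q ⟨h1, h2⟩
  have ho_inv : ∀ p : P, other (other p) = p := by
    intro p
    exact (ho_uniq (other p) p (fun h => ho_ne p h.symm) (ho_vtx p).symm).symm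
  let flip : P → P := fun p => (p.1, !p.2)
  have hflip_flip : ∀ p : P, flip (flip p) = p := by
    intro p; simp [flip]
  have hflip_ne : ∀ p : P, flip p ≠ p := by
    intro p h
    have := congrArg Prod.snd h
    simp [flip] at this
  have hflip_edge : ∀ p : P, (flip p).1 = p.1 := fun p => rfl
  let next : P → P := fun p => other (flip p)
  have hnext_inj : Function.Injective next := by
    intro p q h
    have : other (other (flip p)) = other (other (flip q)) := congrArg other h
    rw [ho_inv, ho_inv] at this
    have := congrArg flip this
    rwa [hflip_flip, hflip_flip] at this
  let σ : Equiv.Perm P := Equiv.ofBijective next (Finite.injective_iff_bijective.mp hnext_inj)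
  have hσ : ∀ p : P, σ p = other (flip p) := fun p => rfl
  have hσ_inv : ∀ p : P, σ⁻¹ p = flip (other p) := by
    intro p
    have : σ (flip (other p)) = p := by
      rw [hσ, hflip_flip, ho_inv]
    exact (Equiv.Perm.inv_eq_iff_eq).mpr this.symm
  -- key conjugation identity
  have hconj : ∀ (n : ℤ) (p : P), flip ((σ ^ n) p) = (σ ^ (-n)) (flip p) := by
    have base : ∀ p : P, flip (σ p) = σ⁻¹ (flip p) := by
      intro p
      rw [hσ, hσ_inv]
    have base' : ∀ p : P, flip (σ⁻¹ p) = σ (flip p) := by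
      intro p
      rw [hσ, hσ_inv, hflip_flip, hflip_flip]
    intro n
    induction n using Int.induction_on with
    | zero => simp
    | succ m ih =>
      intro p
      calc flip ((σ ^ ((m : ℤ) + 1)) p) = flip ((σ ^ (m : ℤ)) (σ p)) := by
            rw [zpow_add_one]; rfl
        _ = (σ ^ (-(m : ℤ))) (flip (σ p)) := ih (σ p)
        _ = (σ ^ (-(m : ℤ))) (σ⁻¹ (flip p)) := by rw [base p]
        _ = (σ ^ (-((m : ℤ) + 1))) (flip p) := by
            rw [← Equiv.Perm.mul_apply]; congr 1; group
    | pred m ih =>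
      intro p
      calc flip ((σ ^ (-(m : ℤ) - 1)) p) = flip ((σ ^ (-(m : ℤ))) (σ⁻¹ p)) := by
            rw [sub_eq_add_neg, zpow_add, zpow_neg_one]; rfl
        _ = (σ ^ ((m : ℤ))) (flip (σ⁻¹ p)) := by rw [ih (σ⁻¹ p), neg_neg]
        _ = (σ ^ ((m : ℤ))) (σ (flip p)) := by rw [base' p]
        _ = (σ ^ (-(-(m : ℤ) - 1))) (flip p) := by
            rw [← Equiv.Perm.mul_apply]; congr 1; group
  have hz : ∀ (a b : ℤ) (q : P), (σ ^ a) ((σ ^ b) q) = (σ ^ (a + b)) q := by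
    intro a b q
    rw [← Equiv.Perm.mul_apply, ← zpow_add]
  have hno_flip : ∀ (n : ℤ) (p : P), (σ ^ n) p ≠ flip p := by
    intro n p h
    rcases Int.even_or_odd n with ⟨m, hm⟩ | ⟨m, hm⟩
    · -- n = m + m : flip fixes σ^m p, impossible
      have : flip ((σ ^ m) p) = (σ ^ m) p := by
        rw [hconj m p, ← h, hz]
        congr 2
        omega
      exact hflip_ne _ this
    · -- n = 2*m + 1 : σ fixes ... impossible
      have h2 : flip ((σ ^ m) p) = σ ((σ ^ m) p) := by
        rw [hconj m p, ← h]
        rw [show σ ((σ ^ m) p) = (σ ^ (1 + m)) p by rw [zpow_add, zpow_one]; rfl, hz]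
        congr 2
        omega
      have h3 : σ ((σ ^ m) p) = other (flip ((σ ^ m) p)) := hσ _
      rw [h2] at h3
      exact ho_ne _ h3.symm
  -- base point and orbit
  obtain ⟨e0, he0⟩ := hne
  let p0 : P := (⟨e0, he0⟩, true)
  have hiter : ∀ n : ℕ, (⇑σ)^[n] p0 = (σ ^ (n : ℤ)) p0 := by
    intro n
    rw [Equiv.Perm.iterate_eq_pow, zpow_natCast]
  have hper : p0 ∈ Function.periodicPts ⇑σ := by
    refine ⟨orderOf σ, orderOf_pos σ, ?_⟩
    show (⇑σ)^[orderOf σ] p0 = p0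
    rw [Equiv.Perm.iterate_eq_pow, pow_orderOf_eq_one]
    rfl
  set N := Function.minimalPeriod (⇑σ) p0 with hNdef
  have hNpos : 0 < N := Function.minimalPeriod_pos_of_mem_periodicPts hper
  have hNiter : (⇑σ)^[N] p0 = p0 := Function.iterate_minimalPeriod
  have hfix : ∀ (τ : Equiv.Perm P), τ p0 = p0 → ∀ m : ℤ, (τ ^ m) p0 = p0 := by
    intro τ hτ m
    have hτ' : τ⁻¹ p0 = p0 := by
      conv_lhs => rw [← hτ]
      exact Equiv.symm_apply_apply τ p0
    induction m using Int.induction_on with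
    | zero => rfl
    | succ m ih => rw [zpow_add_one, Equiv.Perm.mul_apply, hτ, ih]
    | pred m ih => rw [sub_eq_add_neg, zpow_add, Equiv.Perm.mul_apply, zpow_neg_one, hτ', ih]
  have red : ∀ z : ℤ, ∃ n : ℕ, n < N ∧ (σ ^ z) p0 = (⇑σ)^[n] p0 := by
    intro z
    have h0 : (0:ℤ) ≤ z % (N:ℤ) := Int.emod_nonneg z (by exact_mod_cast hNpos.ne')
    have h1 : z % (N:ℤ) < (N:ℤ) := Int.emod_lt_of_pos z (by exact_mod_cast hNpos)
    refine ⟨(z % (N:ℤ)).toNat, by omega, ?_⟩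
    have hNfix : (σ ^ (N:ℤ)) p0 = p0 := by rw [← hiter N]; exact hNiter
    have hfix2 : (σ ^ ((N:ℤ) * (z / (N:ℤ)))) p0 = p0 := by
      rw [zpow_mul]
      exact hfix _ hNfix _
    calc (σ ^ z) p0 = (σ ^ (z % (N:ℤ) + (N:ℤ) * (z / (N:ℤ)))) p0 := by
          rw [Int.emod_add_mul_ediv]
      _ = (σ ^ (z % (N:ℤ))) ((σ ^ ((N:ℤ) * (z / (N:ℤ)))) p0) := (hz _ _ _).symm
      _ = (σ ^ (z % (N:ℤ))) p0 := by rw [hfix2]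
      _ = (⇑σ)^[(z % (N:ℤ)).toNat] p0 := by
          rw [hiter]
          congr 1
          rw [Int.toNat_of_nonneg h0]
  have hinjOn : ∀ m n : ℕ, m < N → n < N → (⇑σ)^[m] p0 = (⇑σ)^[n] p0 → m = n := by
    intro m n hm hn h
    exact Function.iterate_injOn_Iio_minimalPeriod (by exact hm) (by exact hn) h
  obtain ⟨k, hk⟩ : ∃ k, N = k + 1 := ⟨N - 1, (Nat.succ_pred_eq_of_pos hNpos).symm⟩
  let q : Fin (k+1) → P := fun i => (⇑σ)^[(i : ℕ)] p0
  have hqz : ∀ i : Fin (k+1), q i = (σ ^ ((i : ℕ) : ℤ)) p0 := fun i => hiter _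
  have hq_inj : ∀ i j : Fin (k+1), q i = q j → i = j := by
    intro i j h
    exact Fin.ext (hinjOn _ _ (by omega) (by omega) h)
  let f : Fin (k+1) → V := fun i => vtx (q i)
  let g : Fin (k+1) → E := fun i => ((q i).1 : E)
  have hg_mem : ∀ i, g i ∈ H := fun i => (q i).1.2
  -- g is injective
  have hg_inj : Function.Injective g := by
    intro i j h
    by_contra hij
    have hfst : (q i).1 = (q j).1 := Subtype.ext h
    have hqij : q i ≠ q j := fun hh => hij (hq_inj i j hh)
    have hflipq : flip (q i) = q j := by
      have hsnd : (q i).2 ≠ (q j).2 := by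
        intro hs
        exact hqij (Prod.ext hfst hs)
      have bool_fact : ∀ a b : Bool, a ≠ b → (!a) = b := by decide
      have hsnd' : (!(q i).2) = (q j).2 := bool_fact ((q i).2) ((q j).2) hsnd
      show ((q i).1, !(q i).2) = q j
      rw [hfst, hsnd']
    have : flip p0 = (σ ^ (((i:ℕ):ℤ) + ((j:ℕ):ℤ))) p0 := by
      have h1 : (σ ^ (-((i:ℕ):ℤ))) (flip p0) = q j := by
        rw [← hconj, ← hqz i, hflipq]
      calc flip p0 = (σ ^ (((i:ℕ):ℤ))) ((σ ^ (-((i:ℕ):ℤ))) (flip p0)) := by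
            rw [hz]; simp
        _ = (σ ^ (((i:ℕ):ℤ))) ((σ ^ (((j:ℕ):ℤ))) p0) := by rw [h1, hqz j]
        _ = _ := hz _ _ _
    exact hno_flip _ _ this.symm
  -- f is injective
  have hf_inj : Function.Injective f := by
    intro i j h
    by_contra hij
    have hqij : q i ≠ q j := fun hh => hij (hq_inj i j hh)
    have hother : q j = other (q i) := ho_uniq (q i) (q j) (Ne.symm hqij) h.symm
    have hother' : other (q i) = σ (flip (q i)) := by
      rw [hσ, hflip_flip]
    have : flip p0 = (σ ^ (((i:ℕ):ℤ) + ((j:ℕ):ℤ) - 1)) p0 := by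
      have h1 : q j = (σ ^ (1 + -((i:ℕ):ℤ))) (flip p0) := by
        rw [hother, hother']
        rw [hqz i, hconj]
        rw [show σ ((σ ^ (-((i:ℕ):ℤ))) (flip p0)) = (σ ^ ((1:ℤ) + -((i:ℕ):ℤ))) (flip p0) by
          rw [zpow_add, zpow_one, Equiv.Perm.mul_apply]]
      calc flip p0 = (σ ^ (((i:ℕ):ℤ) - 1)) ((σ ^ ((1:ℤ) + -((i:ℕ):ℤ))) (flip p0)) := by
            rw [hz, show ((i:ℕ):ℤ) - 1 + (1 + -((i:ℕ):ℤ)) = 0 by ring, zpow_zero]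
            rfl
        _ = (σ ^ (((i:ℕ):ℤ) - 1)) ((σ ^ (((j:ℕ):ℤ))) p0) := by rw [← h1, hqz j]
        _ = _ := by rw [hz]; ring_nf
    exact hno_flip _ _ this.symm
  -- reachable vertex set
  let W : V → Prop := fun x => ∃ z : ℤ, vtx ((σ ^ z) p0) = x
  have hWflip : ∀ z : ℤ, W (vtx (flip ((σ ^ z) p0))) := by
    intro z
    refine ⟨1 + z, ?_⟩
    have h1 : (σ ^ (1 + z)) p0 = σ ((σ ^ z) p0) := by rw [zpow_add, zpow_one]; rfl
    rw [h1, hσ, ho_vtx]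
  have hW_edge : ∀ r : P, W (vtx r) → ∃ z : ℤ, ((σ ^ z) p0).1 = r.1 := by
    intro r ⟨z, hzv⟩
    by_cases hr : r = (σ ^ z) p0
    · exact ⟨z, by rw [← hr]⟩
    · have hro : r = other ((σ ^ z) p0) := ho_uniq _ _ hr hzv.symm
      refine ⟨z - 1, ?_⟩
      have h1 : (σ ^ (z - 1)) p0 = σ⁻¹ ((σ ^ z) p0) := by
        rw [show z - 1 = -1 + z by ring, zpow_add, zpow_neg_one]; rfl
      rw [h1, hσ_inv, hro]
  have hW_ends : ∀ (e : E), e ∈ H → (∃ z : ℤ, (((σ ^ z) p0).1 : E) = e) →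
      W ((ends e).1) ∧ W ((ends e).2) := by
    intro e he ⟨z, hze⟩
    have h1 : W (vtx ((σ ^ z) p0)) := ⟨z, rfl⟩
    have h2 : W (vtx (flip ((σ ^ z) p0))) := hWflip z
    cases hb : ((σ ^ z) p0).2
    · have hv1 : vtx ((σ ^ z) p0) = (ends e).2 := by rw [← hze]; simp [vtx, hb]
      have hv2 : vtx (flip ((σ ^ z) p0)) = (ends e).1 := by rw [← hze]; simp [vtx, flip, hb]
      exact ⟨hv2 ▸ h2, hv1 ▸ h1⟩
    · have hv1 : vtx ((σ ^ z) p0) = (ends e).1 := by rw [← hze]; simp [vtx, hb]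
      have hv2 : vtx (flip ((σ ^ z) p0)) = (ends e).2 := by rw [← hze]; simp [vtx, flip, hb]
      exact ⟨hv1 ▸ h1, hv2 ▸ h2⟩
  have hWstep : ∀ x y : V, W x → (∃ e ∈ H, ends e = (x, y) ∨ ends e = (y, x)) → W y := by
    intro x y hWx ⟨e, he, hexy⟩
    rcases hexy with hexy | hexy
    · have hr : vtx ((⟨e, he⟩, true) : P) = x := by simp [vtx, hexy]
      obtain ⟨z, hz'⟩ := hW_edge _ (hr ▸ hWx)
      have hW2 := hW_ends e he ⟨z, congrArg Subtype.val hz'⟩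
      rw [hexy] at hW2
      exact hW2.2
    · have hr : vtx ((⟨e, he⟩, false) : P) = x := by simp [vtx, hexy]
      obtain ⟨z, hz'⟩ := hW_edge _ (hr ▸ hWx)
      have hW2 := hW_ends e he ⟨z, congrArg Subtype.val hz'⟩
      rw [hexy] at hW2
      exact hW2.1
  have hWp0 : W (vtx p0) := ⟨0, by rw [zpow_zero]; rfl⟩
  have hmain : ∀ e ∈ H, ∃ z : ℤ, (((σ ^ z) p0).1 : E) = e := by
    intro e he
    have hxall : ∀ y : V, Relation.ReflTransGen
        (fun a b => ∃ e ∈ H, ends e = (a, b) ∨ ends e = (b, a)) (vtx p0) y → W y := by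
      intro y h
      induction h with
      | refl => exact hWp0
      | tail hab hbc ih => exact hWstep _ _ ih hbc
    have hx : W ((ends e).1) :=
      hxall _ (hconn (vtx p0) ((ends e).1) (hvtx_incident p0) ⟨e, he, Or.inl rfl⟩)
    have hr : vtx ((⟨e, he⟩, true) : P) = (ends e).1 := by simp [vtx]
    obtain ⟨z, hz'⟩ := hW_edge _ (hr ▸ hx)
    exact ⟨z, congrArg Subtype.val hz'⟩
  refine ⟨k, f, g, hf_inj, hg_inj, ?_, ?_⟩
  · ext e
    simp only [Finset.mem_image, Finset.mem_univ, true_and]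
    constructor
    · intro he
      obtain ⟨z, hz'⟩ := hmain e he
      obtain ⟨n, hn, hred⟩ := red z
      refine ⟨⟨n, by omega⟩, ?_⟩
      show (((⇑σ)^[n] p0).1 : E) = e
      rw [← hred, hz']
    · rintro ⟨i, rfl⟩
      exact hg_mem i
  · intro i
    have hsucc : q (i + 1) = σ (q i) := by
      rcases Nat.lt_or_ge ((i : ℕ) + 1) N with hl | hl
      · have hv : ((i + 1 : Fin (k+1)) : ℕ) = (i : ℕ) + 1 := by
          rw [Fin.val_add_one_of_lt]
          rw [Fin.lt_iff_val_lt_val, Fin.val_last]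
          omega
        show (⇑σ)^[((i + 1 : Fin (k+1)) : ℕ)] p0 = σ ((⇑σ)^[(i : ℕ)] p0)
        rw [hv, Function.iterate_succ_apply']
      · have hik : (i : ℕ) = k := by have := i.isLt; omega
        have hv : ((i + 1 : Fin (k+1)) : ℕ) = 0 := by
          have hil : i = Fin.last k := Fin.ext (by rw [hik]; rfl)
          rw [hil, Fin.last_add_one]
          rfl
        show (⇑σ)^[((i + 1 : Fin (k+1)) : ℕ)] p0 = σ ((⇑σ)^[(i : ℕ)] p0)
        rw [hv]
        show p0 = σ ((⇑σ)^[(i : ℕ)] p0)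
        rw [← Function.iterate_succ_apply' σ, hik, show k.succ = N by omega, hNiter]
    have hvs : vtx (q (i + 1)) = vtx (flip (q i)) := by
      rw [hsucc, hσ, ho_vtx]
    cases hb : (q i).2
    · right
      have h1 : f i = (ends (g i)).2 := by simp [f, g, vtx, hb]
      have h2 : f (i + 1) = (ends (g i)).1 := by
        rw [show f (i + 1) = vtx (q (i + 1)) from rfl, hvs]
        simp [g, vtx, flip, hb]
      rw [h1, h2]
    · left
      have h1 : f i = (ends (g i)).1 := by simp [f, g, vtx, hb]
      have h2 : f (i + 1) = (ends (g i)).2 := by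
        rw [show f (i + 1) = vtx (q (i + 1)) from rfl, hvs]
        simp [g, vtx, flip, hb]
      rw [h1, h2]

/-- Let `A` be a frame matrix over a field `F` whose columns are indexed by the arcs of a
digraph `G = (V, ends)`, each column supported on the endpoints of the corresponding arc.
If `H` is a (nonempty) connected subgraph of `G` of minimum degree at least `2` (loops
counting twice) that is not a cycle, then the columns of `A` indexed by the edges of `H`
are linearly dependent. -/
theorem theta_subgraph_dependent {F V E : Type*} [Field F] [Fintype V] [DecidableEq V]
    [DecidableEq E] (ends : E → V × V) (A : V → E → F)
    (hframe : ∀ (e : E) (w : V), A w e ≠ 0 → w = (ends e).1 ∨ w = (ends e).2)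
    (H : Finset E) (hne : H.Nonempty)
    (hdeg : ∀ x : V, (∃ e ∈ H, (ends e).1 = x ∨ (ends e).2 = x) →
      2 ≤ ∑ e ∈ H, ((if (ends e).1 = x then 1 else 0) + (if (ends e).2 = x then 1 else 0)))
    (hconn : ∀ x y : V, (∃ e ∈ H, (ends e).1 = x ∨ (ends e).2 = x) →
      (∃ e ∈ H, (ends e).1 = y ∨ (ends e).2 = y) →
      Relation.ReflTransGen (fun a b => ∃ e ∈ H, ends e = (a, b) ∨ ends e = (b, a)) x y)
    (hnotcycle : ¬ IsCycleEdgeSet ends H) :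
    ¬ LinearIndependent F (fun e : ↥H => fun w => A w (e : E)) := by
  classical
  intro hli
  let S : Finset V := Finset.univ.filter fun x => ∃ e ∈ H, (ends e).1 = x ∨ (ends e).2 = x
  have hS : ∀ x : V, x ∈ S ↔ ∃ e ∈ H, (ends e).1 = x ∨ (ends e).2 = x := by
    intro x; simp [S]
  have hend1 : ∀ e ∈ H, (ends e).1 ∈ S := fun e he => (hS _).mpr ⟨e, he, Or.inl rfl⟩
  have hend2 : ∀ e ∈ H, (ends e).2 ∈ S := fun e he => (hS _).mpr ⟨e, he, Or.inr rfl⟩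
  have hli' : LinearIndependent F (fun e : ↥H => fun w : ↥S => A w (e : E)) := by
    rw [Fintype.linearIndependent_iff] at hli ⊢
    intro c hc i
    refine hli c ?_ i
    funext w
    by_cases hw : w ∈ S
    · have h1 := congrFun hc ⟨w, hw⟩
      simpa [Finset.sum_apply] using h1
    · have hz : ∀ e : ↥H, A w (e : E) = 0 := by
        intro e
        by_contra hA
        rcases hframe (e : E) w hA with h | h
        · exact hw (h ▸ hend1 _ e.2)
        · exact hw (h ▸ hend2 _ e.2)
      simp [Finset.sum_apply, hz]
  have hcard : H.card ≤ S.card := by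
    have h1 := hli'.fintype_card_le_finrank
    rw [Module.finrank_fintype_fun_eq_card] at h1
    simpa [Fintype.card_coe] using h1
  let d : V → ℕ := fun x =>
    ∑ e ∈ H, ((if (ends e).1 = x then 1 else 0) + (if (ends e).2 = x then 1 else 0))
  have hsum : ∑ x ∈ S, d x = 2 * H.card := by
    calc ∑ x ∈ S, d x
        = ∑ e ∈ H, ∑ x ∈ S,
            ((if (ends e).1 = x then 1 else 0) + (if (ends e).2 = x then 1 else 0)) :=
          Finset.sum_comm
      _ = ∑ _e ∈ H, 2 := by
          refine Finset.sum_congr rfl fun e he => ?_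
          rw [Finset.sum_add_distrib, Finset.sum_ite_eq, Finset.sum_ite_eq,
            if_pos (hend1 e he), if_pos (hend2 e he)]
      _ = 2 * H.card := by rw [Finset.sum_const, smul_eq_mul, mul_comm]
  have hdegS : ∀ x ∈ S, 2 ≤ d x := fun x hx => hdeg x ((hS x).mp hx)
  have hSle : 2 * S.card ≤ ∑ x ∈ S, d x := by
    calc 2 * S.card = ∑ _x ∈ S, 2 := by rw [Finset.sum_const, smul_eq_mul, mul_comm]
      _ ≤ ∑ x ∈ S, d x := Finset.sum_le_sum hdegS
  have hcardeq : S.card = H.card := by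
    rw [hsum] at hSle
    omega
  have hdeq : ∀ x ∈ S, d x = 2 := by
    by_contra h
    push_neg at h
    obtain ⟨x0, hx0, hx0ne⟩ := h
    have hlt : ∑ _x ∈ S, 2 < ∑ x ∈ S, d x :=
      Finset.sum_lt_sum hdegS ⟨x0, hx0, lt_of_le_of_ne (hdegS x0 hx0) (Ne.symm hx0ne)⟩
    rw [hsum, Finset.sum_const, smul_eq_mul] at hlt
    omega
  exact hnotcycle (cycle_of_two_regular ends H hne
    (fun x hx => hdeq x ((hS x).mpr hx)) hconn)
end
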